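/- arXiv:1503.04563 — 2 statements merged into one kernel-verified Lean document; each statement's English description precedes it below -/
import Mathlib

section
/- Let p be a prime and k ≥ 1. The 𝔽_p-linear map Φ : ({λ : Fin k → ZMod p // λ ≠ 0} → H) → (((Fin k → ℕ) × Fin (p^k − 1)) →₀ ZMod p), defined by Φ(x)(I, ν) = Σ_{λ ≠ 0} (D_{ℓ_λ^{(ν : ℕ)+1}} (x λ)) I, is surjective. -/
/-- The linear form `λ₁ t₁ + ⋯ + λ_k t_k ∈ 𝔽_p[t₁,…,t_k]` attached to
`λ : Fin k → ZMod p`. -/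
noncomputable def linForm (p k : ℕ) (lam : Fin k → ZMod p) :
    MvPolynomial (Fin k) (ZMod p) :=
  ∑ i : Fin k, lam i • MvPolynomial.X i

open MvPolynomial Matrix

lemma degree_eq_sum {k : ℕ} (d : Fin k →₀ ℕ) : d.degree = ∑ i : Fin k, d i := by
  rw [Finsupp.degree]
  apply Finset.sum_subset (Finset.subset_univ _)
  intro i _ hi
  exact Finsupp.notMem_support_iff.mp hi

lemma linForm_isHomogeneous (p k : ℕ) (lam : Fin k → ZMod p) :
    (linForm p k lam).IsHomogeneous 1 := by
  apply MvPolynomial.IsHomogeneous.sum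
  intro i _
  rw [MvPolynomial.smul_eq_C_mul]
  simpa using (isHomogeneous_C _ (lam i)).mul (isHomogeneous_X _ i)

/-- degree-d multi-indices -/
def Sd (k d : ℕ) : Finset (Fin k → ℕ) :=
  (Fintype.piFinset fun _ => Finset.range (d+1)).filter (fun K => ∑ i, K i = d)

lemma mem_Sd {k d : ℕ} (K : Fin k → ℕ) : K ∈ Sd k d ↔ ∑ i, K i = d := by
  constructor
  · intro h; exact (Finset.mem_filter.mp h).2
  · intro h
    refine Finset.mem_filter.mpr ⟨Fintype.mem_piFinset.mpr fun i => ?_, h⟩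
    rw [Finset.mem_range]
    have : K i ≤ d := h ▸ Finset.single_le_sum (f := K) (fun _ _ => Nat.zero_le _)
      (Finset.mem_univ i)
    omega

/-- target index set: pairs (I,ν) with |I| + ν + 1 = d -/
def Td (p k d : ℕ) : Finset ((Fin k → ℕ) × Fin (p ^ k - 1)) :=
  ((Fintype.piFinset fun _ => Finset.range (d+1)) ×ˢ Finset.univ).filter
    (fun z => (∑ i, z.1 i) + (z.2 : ℕ) + 1 = d)

lemma mem_Td {p k d : ℕ} (z : (Fin k → ℕ) × Fin (p ^ k - 1)) :
    z ∈ Td p k d ↔ (∑ i, z.1 i) + (z.2 : ℕ) + 1 = d := by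
  constructor
  · intro h; exact (Finset.mem_filter.mp h).2
  · intro h
    refine Finset.mem_filter.mpr ⟨Finset.mem_product.mpr
      ⟨Fintype.mem_piFinset.mpr fun i => ?_, Finset.mem_univ _⟩, h⟩
    rw [Finset.mem_range]
    have : z.1 i ≤ ∑ j, z.1 j := Finset.single_le_sum (f := z.1) (fun _ _ => Nat.zero_le _)
      (Finset.mem_univ i)
    omega

open scoped Classical in
/-- the matrix of Φ restricted to degree d -/
noncomputable def Mx (p k d : ℕ) :
    Matrix (Td p k d) ({lam : Fin k → ZMod p // lam ≠ 0} × Sd k d) (ZMod p) :=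
  fun z w => if z.1.1 ≤ (w.2 : Fin k → ℕ) then
    MvPolynomial.coeff
      (Finsupp.equivFunOnFinite.symm ((w.2 : Fin k → ℕ) - z.1.1))
      (linForm p k w.1.1 ^ ((z.1.2 : ℕ) + 1))
    else 0

-- matrix entry = coefficient of monomial-times-power
lemma Mx_eq_coeff (p k d : ℕ) (z : Td p k d) (lam : {lam : Fin k → ZMod p // lam ≠ 0})
    (K : Sd k d) (m : Fin k →₀ ℕ) (hm : ⇑m = (K : Fin k → ℕ)) :
    Mx p k d z (lam, K) =
      MvPolynomial.coeff m
        (monomial (Finsupp.equivFunOnFinite.symm z.1.1) (1 : ZMod p) *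
          linForm p k lam.1 ^ ((z.1.2 : ℕ) + 1)) := by
  rw [MvPolynomial.coeff_monomial_mul', Mx]
  have hle : (Finsupp.equivFunOnFinite.symm z.1.1 ≤ m) ↔
      (z.1.1 ≤ (K : Fin k → ℕ)) := by
    rw [Finsupp.le_def]
    constructor <;> intro h i <;> have := h i <;> simpa [hm] using this
  split_ifs with h1 h2 h2 <;>
    simp only [] at h1
  · rw [one_mul]
    congr 1
    ext i
    simp [hm, Finsupp.coe_tsub]
  · exact absurd (hle.mpr h1) h2
  · exact absurd (hle.mp h2) h1
  · rfl

lemma coeff_linForm (p k : ℕ) (lam : Fin k → ZMod p) (i : Fin k) :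
    MvPolynomial.coeff (Finsupp.single i 1) (linForm p k lam) = lam i := by
  classical
  rw [linForm, MvPolynomial.coeff_sum]
  have : ∀ j : Fin k, MvPolynomial.coeff (Finsupp.single i 1) (lam j • X j)
      = if j = i then lam j else 0 := by
    intro j
    rw [MvPolynomial.coeff_smul, MvPolynomial.coeff_X']
    split_ifs with h1 h2 h2
    · simp
    · exact absurd (Finsupp.single_left_injective one_ne_zero h1) h2
    · exact absurd (by rw [h2]) h1
    · simp
  simp [this]

lemma linForm_injective (p k : ℕ) : Function.Injective (linForm p k) := by
  intro a b h
  funext i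
  rw [← coeff_linForm p k a i, ← coeff_linForm p k b i, h]

lemma prod_isHomogeneous (p k : ℕ) (lam : Fin k → ZMod p) (I : Fin k → ℕ) (n : ℕ) :
    (monomial (Finsupp.equivFunOnFinite.symm I) (1 : ZMod p) *
      linForm p k lam ^ n).IsHomogeneous ((∑ i, I i) + n) := by
  have h1 : (Finsupp.equivFunOnFinite.symm I).degree = ∑ i, I i := by
    rw [degree_eq_sum]; rfl
  have h2 := ((linForm_isHomogeneous p k lam).pow n)
  rw [one_mul] at h2
  exact (isHomogeneous_monomial _ h1).mul h2

open scoped Classical in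
lemma Mx_transpose_inj (p k d : ℕ) [Fact p.Prime] (hk : 1 ≤ k) :
    Function.Injective (Mx p k d)ᵀ.mulVecLin := by
  have key : ∀ c, (Mx p k d)ᵀ.mulVecLin c = 0 → c = 0 := by
    intro c hc
    have hw : ∀ w : {lam : Fin k → ZMod p // lam ≠ 0} × Sd k d,
        ∑ z, Mx p k d z w * c z = 0 := by
      intro w
      have := congrFun hc w
      simpa [Matrix.mulVecLin_apply, Matrix.mulVec, Matrix.vecMul, dotProduct,
        Matrix.transpose_apply, mul_comm] using this
    set q : Fin (p ^ k - 1) → MvPolynomial (Fin k) (ZMod p) := fun ν =>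
      ∑ z : Td p k d, (if (z : _).1.2 = ν then c z else 0) •
        monomial (Finsupp.equivFunOnFinite.symm (z : _).1.1) (1 : ZMod p) with hqdef
    set G : Polynomial (MvPolynomial (Fin k) (ZMod p)) :=
      ∑ ν : Fin (p ^ k - 1), Polynomial.C (q ν) * Polynomial.X ^ ((ν : ℕ) + 1) with hGdef
    have heval : ∀ lam : Fin k → ZMod p, G.eval (linForm p k lam) = 0 := by
      intro lam
      rcases eq_or_ne lam 0 with rfl | hlam
      · have : linForm p k 0 = 0 := by simp [linForm]
        rw [this, hGdef]
        simp [Polynomial.eval_finset_sum]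
      · rw [hGdef]
        rw [Polynomial.eval_finset_sum]
        simp only [Polynomial.eval_mul, Polynomial.eval_C, Polynomial.eval_pow,
          Polynomial.eval_X]
        apply MvPolynomial.ext
        intro m
        rw [MvPolynomial.coeff_sum]
        have hterm : ∀ ν : Fin (p ^ k - 1),
            MvPolynomial.coeff m (q ν * linForm p k lam ^ ((ν : ℕ) + 1)) =
            ∑ z : Td p k d, (if (z : _).1.2 = ν then
              c z * MvPolynomial.coeff m
                (monomial (Finsupp.equivFunOnFinite.symm (z : _).1.1) (1 : ZMod p) *
                  linForm p k lam ^ (((z : _).1.2 : ℕ) + 1)) else 0) := by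
          intro ν
          rw [hqdef]
          rw [Finset.sum_mul, MvPolynomial.coeff_sum]
          apply Finset.sum_congr rfl
          intro z _
          rw [smul_mul_assoc, MvPolynomial.coeff_smul]
          split_ifs with h
          · rw [h]; rfl
          · simp
        rw [Finset.sum_congr rfl (fun ν _ => hterm ν), Finset.sum_comm]
        have hswap : ∀ z : Td p k d,
            (∑ ν : Fin (p ^ k - 1), if (z : _).1.2 = ν then
              c z * MvPolynomial.coeff m
                (monomial (Finsupp.equivFunOnFinite.symm (z : _).1.1) (1 : ZMod p) *
                  linForm p k lam ^ (((z : _).1.2 : ℕ) + 1)) else 0) =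
            c z * MvPolynomial.coeff m
                (monomial (Finsupp.equivFunOnFinite.symm (z : _).1.1) (1 : ZMod p) *
                  linForm p k lam ^ (((z : _).1.2 : ℕ) + 1)) := by
          intro z
          rw [Finset.sum_ite_eq _ ((z : _).1.2)]
          simp
        rw [Finset.sum_congr rfl (fun z _ => hswap z)]
        simp only [MvPolynomial.coeff_zero]
        rcases eq_or_ne (∑ i, m i) d with hm | hm
        · have := hw (⟨lam, hlam⟩, ⟨Finsupp.equivFunOnFinite m, (mem_Sd _).mpr hm⟩)
          rw [← this]
          apply Finset.sum_congr rfl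
          intro z _
          rw [← Mx_eq_coeff p k d z ⟨lam, hlam⟩
            ⟨Finsupp.equivFunOnFinite m, (mem_Sd _).mpr hm⟩ m rfl, mul_comm]
        · apply Finset.sum_eq_zero
          intro z _
          have hz := (mem_Td (p := p) (k := k) (d := d) z.1).mp z.2
          have hh := prod_isHomogeneous p k lam (z : _).1.1 (((z : _).1.2 : ℕ) + 1)
          rw [MvPolynomial.IsHomogeneous.coeff_eq_zero hh, mul_zero]
          rw [degree_eq_sum]
          omega
    have hG0 : G = 0 := by
      apply Polynomial.eq_zero_of_natDegree_lt_card_of_eval_eq_zero G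
        (linForm_injective p k) heval
      have hcard : Fintype.card (Fin k → ZMod p) = p ^ k := by
        simp [ZMod.card]
      rw [hcard]
      have hdeg : G.natDegree ≤ p ^ k - 1 := by
        rw [hGdef]
        apply Polynomial.natDegree_sum_le_of_forall_le
        intro ν _
        apply le_trans (Polynomial.natDegree_C_mul_le _ _)
        rw [Polynomial.natDegree_X_pow]
        omega
      have hp : 2 ≤ p ^ k := by
        have := (Fact.out : p.Prime).two_le
        calc 2 ≤ p := this
          _ = p ^ 1 := (pow_one p).symm
          _ ≤ p ^ k := Nat.pow_le_pow_right (by omega) hk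
      omega
    have hq : ∀ ν, q ν = 0 := by
      intro ν
      have : G.coeff ((ν : ℕ) + 1) = q ν := by
        rw [hGdef, Polynomial.finset_sum_coeff]
        have : ∀ ν' : Fin (p ^ k - 1),
            (Polynomial.C (q ν') * Polynomial.X ^ ((ν' : ℕ) + 1)).coeff ((ν : ℕ) + 1) =
            if ν' = ν then q ν' else 0 := by
          intro ν'
          rw [Polynomial.coeff_C_mul, Polynomial.coeff_X_pow]
          have : ((ν : ℕ) + 1 = (ν' : ℕ) + 1) ↔ (ν' = ν) := by
            constructor
            · intro h; exact Fin.ext (by omega)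
            · intro h; rw [h]
          split_ifs with h1 h2 h2
          · simp
          · exact absurd (this.mp h1) h2
          · exact absurd (this.mpr h2) h1
          · simp
        rw [Finset.sum_congr rfl (fun ν' _ => this ν')]
        simp
      rw [← this, hG0]
      simp
    funext z
    have : MvPolynomial.coeff (Finsupp.equivFunOnFinite.symm (z : _).1.1) (q (z : _).1.2)
        = c z := by
      rw [hqdef]
      rw [MvPolynomial.coeff_sum]
      rw [Finset.sum_eq_single z]
      · simp [MvPolynomial.coeff_monomial]
      · intro z' _ hz'
        rw [MvPolynomial.coeff_smul, MvPolynomial.coeff_monomial]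
        split_ifs with h1 h2
        · exfalso
          apply hz'
          have hI : (z' : _).1.1 = (z : _).1.1 :=
            Finsupp.equivFunOnFinite.symm.injective h2
          exact Subtype.ext (Prod.ext hI h1)
        all_goals simp
      · intro h
        exact absurd (Finset.mem_univ z) h
    rw [hq, MvPolynomial.coeff_zero] at this
    rw [Pi.zero_apply, ← this]
  intro a b hab
  have := key (a - b) (by rw [map_sub, hab, sub_self])
  exact sub_eq_zero.mp this

lemma surj_of_transpose_inj {m n K : Type*} [Fintype m] [Fintype n] [DecidableEq m]
    [DecidableEq n] [Field K] (M : Matrix m n K)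
    (h : Function.Injective Mᵀ.mulVecLin) : Function.Surjective M.mulVecLin := by
  have h1 : Mᵀ.rank = Fintype.card m := by
    have := Mᵀ.mulVecLin.finrank_range_add_finrank_ker
    rw [LinearMap.ker_eq_bot.mpr h, finrank_bot, add_zero] at this
    rw [Matrix.rank, this]
    simp [Module.finrank_pi]
  have h2 : M.rank = Fintype.card m := by rw [← Matrix.rank_transpose, h1]
  rw [← LinearMap.range_eq_top]
  apply Submodule.eq_top_of_finrank_eq
  rw [show Module.finrank K (LinearMap.range M.mulVecLin) = M.rank from rfl, h2]
  simp [Module.finrank_pi]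

lemma Mx_surj (p k d : ℕ) [Fact p.Prime] (hk : 1 ≤ k) :
    Function.Surjective (Mx p k d).mulVecLin := by
  classical
  exact surj_of_transpose_inj _ (Mx_transpose_inj p k d hk)

/-- The contraction operator `D_g` on the free `𝔽_p`-module `H = ((Fin k → ℕ) →₀ 𝔽_p)`,
dual to multiplication by `g`: `(D_g x) I = ∑_{J ∈ g.support} (coeff J g) * x (I + J)`. -/
noncomputable def contract (p k : ℕ) (g : MvPolynomial (Fin k) (ZMod p))
    (x : (Fin k → ℕ) →₀ ZMod p) : (Fin k → ℕ) →₀ ZMod p :=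
  Finsupp.onFinset (g.support.biUnion fun J => x.support.image fun K => K - J)
    (fun I => ∑ J ∈ g.support, MvPolynomial.coeff J g * x (I + J))
    (fun I hI => by
      by_contra hmem
      apply hI
      apply Finset.sum_eq_zero
      intro J hJ
      rcases eq_or_ne (x (I + J)) 0 with h | h
      · rw [h, mul_zero]
      · exact absurd
          (Finset.mem_biUnion.mpr ⟨J, hJ, Finset.mem_image.mpr
            ⟨I + J, Finsupp.mem_support_iff.mpr h, by funext t; simp⟩⟩)
          hmem)

lemma contract_apply (p k : ℕ) (g : MvPolynomial (Fin k) (ZMod p))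
    (x : (Fin k → ℕ) →₀ ZMod p) (I : Fin k → ℕ) :
    contract p k g x I = ∑ J ∈ g.support, MvPolynomial.coeff J g * x (I + J) := rfl

open scoped Classical in
lemma core_single (p k : ℕ) [Fact p.Prime] (hk : 1 ≤ k) (I₀ : Fin k → ℕ)
    (ν₀ : Fin (p ^ k - 1)) :
    ∃ x : {lam : Fin k → ZMod p // lam ≠ 0} → ((Fin k → ℕ) →₀ ZMod p),
      ∀ (I : Fin k → ℕ) (ν : Fin (p ^ k - 1)),
        (if (I, ν) = (I₀, ν₀) then (1 : ZMod p) else 0) =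
          ∑ lam : {lam : Fin k → ZMod p // lam ≠ 0},
            contract p k (linForm p k lam.1 ^ ((ν : ℕ) + 1)) (x lam) I := by
  set d : ℕ := (∑ i, I₀ i) + (ν₀ : ℕ) + 1 with hd
  have hmem : (I₀, ν₀) ∈ Td p k d := (mem_Td _).mpr rfl
  obtain ⟨x', hx'⟩ := Mx_surj p k d hk (Pi.single ⟨(I₀, ν₀), hmem⟩ 1)
  refine ⟨fun lam => ∑ K : Sd k d, Finsupp.single (K : Fin k → ℕ) (x' (lam, K)),
    fun I ν => ?_⟩
  have hterm : ∀ lam : {lam : Fin k → ZMod p // lam ≠ 0},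
      contract p k (linForm p k lam.1 ^ ((ν : ℕ) + 1))
        (∑ K : Sd k d, Finsupp.single (K : Fin k → ℕ) (x' (lam, K))) I =
      ∑ K : Sd k d, (if I ≤ (K : Fin k → ℕ) then
          MvPolynomial.coeff (Finsupp.equivFunOnFinite.symm ((K : Fin k → ℕ) - I))
            (linForm p k lam.1 ^ ((ν : ℕ) + 1)) else 0) * x' (lam, K) := by
    intro lam
    set g := linForm p k lam.1 ^ ((ν : ℕ) + 1) with hg
    rw [contract_apply]
    have happ : ∀ J : Fin k →₀ ℕ,
        (∑ K : Sd k d, Finsupp.single (K : Fin k → ℕ) (x' (lam, K))) (I + ⇑J) =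
        ∑ K : Sd k d, (if (K : Fin k → ℕ) = I + ⇑J then x' (lam, K) else 0) := by
      intro J
      rw [Finsupp.finset_sum_apply]
      exact Finset.sum_congr rfl fun K _ => Finsupp.single_apply
    rw [Finset.sum_congr rfl (fun J _ => by rw [happ J, Finset.mul_sum])]
    rw [Finset.sum_comm]
    apply Finset.sum_congr rfl
    intro K _
    by_cases hIK : I ≤ (K : Fin k → ℕ)
    · set J₀ : Fin k →₀ ℕ := Finsupp.equivFunOnFinite.symm ((K : Fin k → ℕ) - I) with hJ₀
      have hcond : ∀ J : Fin k →₀ ℕ, ((K : Fin k → ℕ) = I + ⇑J) ↔ J = J₀ := by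
        intro J
        constructor
        · intro h
          ext i
          have h1 := congrFun h i
          have h2 : I i ≤ (K : Fin k → ℕ) i := hIK i
          show J i = (K : Fin k → ℕ) i - I i
          simp only [Pi.add_apply] at h1
          omega
        · intro h
          funext i
          have h2 : I i ≤ (K : Fin k → ℕ) i := hIK i
          rw [h]
          show (K : Fin k → ℕ) i = I i + ((K : Fin k → ℕ) i - I i)
          omega
      have : ∀ J ∈ g.support, MvPolynomial.coeff J g *
          (if (K : Fin k → ℕ) = I + ⇑J then x' (lam, K) else 0) =
          (if J = J₀ then MvPolynomial.coeff J g * x' (lam, K) else 0) := by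
        intro J _
        rw [if_congr (hcond J) rfl rfl]
        split_ifs <;> simp
      rw [Finset.sum_congr rfl this, Finset.sum_ite_eq' g.support J₀]
      rw [if_pos hIK]
      split_ifs with h
      · rfl
      · rw [MvPolynomial.notMem_support_iff.mp h, zero_mul]
    · rw [if_neg hIK, zero_mul]
      apply Finset.sum_eq_zero
      intro J _
      rw [if_neg, mul_zero]
      intro h
      exact hIK (h ▸ fun i => Nat.le_add_right _ _)
  rw [Finset.sum_congr rfl (fun lam _ => hterm lam)]
  by_cases hIν : (I, ν) ∈ Td p k d
  · have := congrFun hx' ⟨(I, ν), hIν⟩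
    rw [Matrix.mulVecLin_apply] at this
    have hmv : ((Mx p k d) *ᵥ x') ⟨(I, ν), hIν⟩ =
        ∑ lam : {lam : Fin k → ZMod p // lam ≠ 0}, ∑ K : Sd k d,
          (if I ≤ (K : Fin k → ℕ) then
            MvPolynomial.coeff (Finsupp.equivFunOnFinite.symm ((K : Fin k → ℕ) - I))
              (linForm p k lam.1 ^ ((ν : ℕ) + 1)) else 0) * x' (lam, K) := by
      rw [Matrix.mulVec, dotProduct, Fintype.sum_prod_type]
      rfl
    rw [← hmv, this, Pi.single_apply]
    split_ifs with h1 h2 h2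
    · rfl
    · exact absurd (Subtype.ext (show ((I,ν) : (Fin k → ℕ) × Fin (p ^ k - 1)) = (I₀,ν₀) from h1)) h2
    · exact absurd (congrArg Subtype.val h2) h1
    · rfl
  · rw [if_neg (fun (h : ((I,ν) : (Fin k → ℕ) × Fin (p ^ k - 1)) = (I₀,ν₀)) => hIν (h ▸ hmem))]
    symm
    apply Finset.sum_eq_zero
    intro lam _
    apply Finset.sum_eq_zero
    intro K _
    by_cases hIK : I ≤ (K : Fin k → ℕ)
    · rw [if_pos hIK]
      rcases eq_or_ne (MvPolynomial.coeff
          (Finsupp.equivFunOnFinite.symm ((K : Fin k → ℕ) - I))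
          (linForm p k lam.1 ^ ((ν : ℕ) + 1))) 0 with h | h
      · rw [h, zero_mul]
      · exfalso
        have hhom := (linForm_isHomogeneous p k lam.1).pow ((ν : ℕ) + 1)
        rw [one_mul] at hhom
        have hdeg : (Finsupp.equivFunOnFinite.symm
            ((K : Fin k → ℕ) - I)).degree = (ν : ℕ) + 1 := by
          by_contra hne
          exact h (hhom.coeff_eq_zero hne)
        rw [degree_eq_sum] at hdeg
        have hco : ∀ i, (Finsupp.equivFunOnFinite.symm ((K : Fin k → ℕ) - I)) i
            = (K : Fin k → ℕ) i - I i := fun i => rfl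
        rw [Finset.sum_congr rfl (fun i _ => hco i)] at hdeg
        have hK := (mem_Sd (K : Fin k → ℕ)).mp K.2
        have hsplit : ∑ i, (K : Fin k → ℕ) i
            = (∑ i, I i) + ∑ i, ((K : Fin k → ℕ) i - I i) := by
          rw [← Finset.sum_add_distrib]
          apply Finset.sum_congr rfl
          intro i _
          have h2 : I i ≤ (K : Fin k → ℕ) i := hIK i
          omega
        apply hIν
        rw [mem_Td]
        show (∑ i, I i) + (ν : ℕ) + 1 = d
        omega
    · rw [if_neg hIK, zero_mul]

/-- Proposition `homcomp`: the map
`⊕_{Λ ∈ Λ_k} H_*^k → H_*^k ⊗ M_k`, `(x_Λ) ↦ ∑_{Λ} Θ_Λ(x_Λ)`, is surjective, where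
`Θ_Λ` in component `ν` is the contraction by `ℓ_Λ^{ν+1}`. -/
theorem homcomp_surjective (p k : ℕ) [Fact p.Prime] (hk : 1 ≤ k)
    (y : ((Fin k → ℕ) × Fin (p ^ k - 1)) →₀ ZMod p) :
    ∃ x : {lam : Fin k → ZMod p // lam ≠ 0} → ((Fin k → ℕ) →₀ ZMod p),
      ∀ (I : Fin k → ℕ) (ν : Fin (p ^ k - 1)),
        y (I, ν) = ∑ lam : {lam : Fin k → ZMod p // lam ≠ 0},
          contract p k (linForm p k lam.1 ^ ((ν : ℕ) + 1)) (x lam) I := by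

  classical
  induction y using Finsupp.induction_linear with
  | zero => exact ⟨0, fun I ν => by simp [contract_apply]⟩
  | add f g hf hg =>
      obtain ⟨xf, hxf⟩ := hf
      obtain ⟨xg, hxg⟩ := hg
      refine ⟨xf + xg, fun I ν => ?_⟩
      rw [Finsupp.add_apply, hxf I ν, hxg I ν, ← Finset.sum_add_distrib]
      apply Finset.sum_congr rfl
      intro lam _
      rw [contract_apply, contract_apply, contract_apply, ← Finset.sum_add_distrib]
      apply Finset.sum_congr rfl
      intro J _
      rw [Pi.add_apply, Finsupp.add_apply, mul_add]
  | single a b =>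
      obtain ⟨I₀, ν₀⟩ := a
      obtain ⟨x₀, hx₀⟩ := core_single p k hk I₀ ν₀
      refine ⟨fun lam => b • x₀ lam, fun I ν => ?_⟩
      have h1 : (Finsupp.single (I₀, ν₀) b) (I, ν) =
          b * (if (I, ν) = ((I₀, ν₀) : (Fin k → ℕ) × Fin (p ^ k - 1)) then 1 else 0) := by
        rw [Finsupp.single_apply]
        split_ifs with h1 h2 h2
        · rw [mul_one]
        · exact absurd h1.symm h2
        · exact absurd h2.symm h1
        · rw [mul_zero]
      rw [h1, hx₀ I ν, Finset.mul_sum]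
      apply Finset.sum_congr rfl
      intro lam _
      rw [contract_apply, contract_apply, Finset.mul_sum]
      apply Finset.sum_congr rfl
      intro J _
      rw [Finsupp.smul_apply, smul_eq_mul]
      ring
end

section
/- Let p be an odd prime and r ≥ 3 a natural number. For k ≥ 1 and d ∈ ℕ let S_k(d) denote the (finite) number of pairs (m, ν) with m : Fin (r−1) → ℕ and ν ∈ ℕ satisfying 1 ≤ ν, ν ≤ p^k − 1, and Σ_i (2 * m i + 1) + 2 * ν = d. Then there exists D ∈ ℕ such that for all d ≥ D with d ≡ r − 1 (mod 2), one has (r − 1) * S_1(d) < S_{r−1}(d). -/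
open Finset

noncomputable instance tupleFintype (n s : ℕ) : Fintype {m : Fin n → ℕ // ∑ i, m i = s} :=
  Fintype.subtype (Finset.Nat.antidiagonalTuple n s) fun _ => Finset.Nat.mem_antidiagonalTuple

lemma odd_sum (n : ℕ) (m : Fin n → ℕ) : (∑ i, (2 * m i + 1)) = 2 * ∑ i, m i + n := by
  rw [Finset.sum_add_distrib, ← Finset.mul_sum]
  simp [mul_comm]

lemma dim_decomp (n B t : ℕ) (hB : B ≤ t) :
    Nat.card {q : (Fin n → ℕ) × ℕ //
      1 ≤ q.2 ∧ q.2 ≤ B ∧ (∑ i, (2 * q.1 i + 1)) + 2 * q.2 = 2 * t + n}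
    = ∑ ν ∈ Icc 1 B, Nat.card {m : Fin n → ℕ // ∑ i, m i = t - ν} := by
  have e : {q : (Fin n → ℕ) × ℕ //
      1 ≤ q.2 ∧ q.2 ≤ B ∧ (∑ i, (2 * q.1 i + 1)) + 2 * q.2 = 2 * t + n}
      ≃ Σ ν : (Icc 1 B : Finset ℕ), {m : Fin n → ℕ // ∑ i, m i = t - (ν : ℕ)} := {
    toFun := fun q => ⟨⟨q.1.2, Finset.mem_Icc.2 ⟨q.2.1, q.2.2.1⟩⟩, ⟨q.1.1, by
      obtain ⟨⟨m, ν⟩, h1, h2, h3⟩ := q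
      dsimp only at h1 h2 h3
      rw [odd_sum] at h3
      have h4 : ν ≤ t := h2.trans hB
      show (∑ i, m i) = t - ν
      omega⟩⟩
    invFun := fun x => ⟨(x.2.1, x.1.1), by
      obtain ⟨⟨ν, hν⟩, ⟨m, hm⟩⟩ := x
      rw [Finset.mem_Icc] at hν
      have h4 : ν ≤ t := hν.2.trans hB
      have hm' : (∑ i, m i) = t - ν := hm
      refine ⟨hν.1, hν.2, ?_⟩
      rw [odd_sum]
      show 2 * (∑ i, m i) + n + 2 * ν = 2 * t + n
      omega⟩
    left_inv := fun q => rfl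
    right_inv := fun x => rfl }
  rw [Nat.card_congr e, Nat.card_eq_fintype_card, Fintype.card_sigma]
  rw [← Finset.sum_coe_sort (Icc 1 B) (fun ν => Nat.card {m : Fin n → ℕ // ∑ i, m i = t - ν})]
  congr 1
  ext ν
  rw [Nat.card_eq_fintype_card]

lemma poly_bound (E : ℕ) : ∀ i : ℕ, ∀ u : ℕ, 1 ≤ u →
    (u + E) ^ (i + 1) ≤ u ^ (i + 1) + u ^ i * (2 + E) ^ (i + 1) := by
  intro i
  induction i with
  | zero => intro u hu; simp
  | succ i ih =>
    intro u hu
    have h2 := ih u hu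
    have hE : E ≤ (2 + E) ^ (i + 1) := by
      calc E ≤ 2 + E := by omega
      _ ≤ (2 + E) ^ (i + 1) := Nat.le_self_pow (by omega) _
    have hui : u ^ i ≤ u ^ (i + 1) := Nat.pow_le_pow_right hu (by omega)
    calc (u + E) ^ (i + 2) = (u + E) ^ (i + 1) * (u + E) := by ring
      _ ≤ (u ^ (i + 1) + u ^ i * (2 + E) ^ (i + 1)) * (u + E) := Nat.mul_le_mul_right _ h2
      _ = u ^ (i + 2) + u ^ (i + 1) * E + u ^ (i + 1) * (2 + E) ^ (i + 1)
          + u ^ i * ((2 + E) ^ (i + 1) * E) := by ring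
      _ ≤ u ^ (i + 2) + u ^ (i + 1) * (2 + E) ^ (i + 1) + u ^ (i + 1) * (2 + E) ^ (i + 1)
          + u ^ (i + 1) * ((2 + E) ^ (i + 1) * E) := by
          gcongr
      _ = u ^ (i + 2) + u ^ (i + 1) * ((2 + E) ^ (i + 1) * (2 + E)) := by ring
      _ = u ^ (i + 2) + u ^ (i + 1) * (2 + E) ^ (i + 2) := by ring

lemma key_lemma (j E u a b m1 m2 : ℕ) (hj : 1 ≤ j) (hab : a < b) (hm1 : m1 ≤ u + E)
    (hm2 : m2 + 1 = u + j) (hu : a * (2 + E) ^ j < u) :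
    a * m1.choose j < b * m2.choose j := by
  have hu1 : 1 ≤ u := by omega
  obtain ⟨i, rfl⟩ : ∃ i, j = i + 1 := ⟨j - 1, by omega⟩
  have hd1 : a * m1.descFactorial (i + 1) < b * m2.descFactorial (i + 1) := by
    calc a * m1.descFactorial (i + 1) ≤ a * (u + E) ^ (i + 1) :=
          Nat.mul_le_mul_left a ((Nat.descFactorial_le (i+1) hm1).trans
            (Nat.descFactorial_le_pow _ _))
      _ ≤ a * (u ^ (i + 1) + u ^ i * (2 + E) ^ (i + 1)) :=
          Nat.mul_le_mul_left a (poly_bound E i u hu1)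
      _ = a * u ^ (i + 1) + u ^ i * (a * (2 + E) ^ (i + 1)) := by ring
      _ < a * u ^ (i + 1) + u ^ i * u :=
          Nat.add_lt_add_left (mul_lt_mul_of_pos_left hu (Nat.pow_pos hu1)) _
      _ = (a + 1) * u ^ (i + 1) := by ring
      _ ≤ b * u ^ (i + 1) := Nat.mul_le_mul_right _ (by omega)
      _ ≤ b * m2.descFactorial (i + 1) := by
          apply Nat.mul_le_mul_left
          have h := Nat.pow_sub_le_descFactorial m2 (i + 1)
          have : m2 + 1 - (i + 1) = u := by omega
          rwa [this] at h
  rw [Nat.descFactorial_eq_factorial_mul_choose, Nat.descFactorial_eq_factorial_mul_choose] at hd1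
  apply Nat.lt_of_mul_lt_mul_left (a := Nat.factorial (i + 1))
  calc (i+1).factorial * (a * m1.choose (i+1)) = a * ((i+1).factorial * m1.choose (i+1)) := by
        ring
    _ < b * ((i+1).factorial * m2.choose (i+1)) := hd1
    _ = (i+1).factorial * (b * m2.choose (i+1)) := by ring

lemma bern (q : ℕ) : ∀ m : ℕ, 1 + m * q ≤ (q + 1) ^ m := by
  intro m
  induction m with
  | zero => simp
  | succ m ih =>
    calc 1 + (m + 1) * q ≤ (1 + m * q) * (q + 1) := by nlinarith [Nat.zero_le (m * q * q)]
      _ ≤ (q + 1) ^ m * (q + 1) := Nat.mul_le_mul_right _ ih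
      _ = (q + 1) ^ (m + 1) := by ring

lemma hab_lemma (p n : ℕ) (hp : 3 ≤ p) (hn : 2 ≤ n) : n * (p - 1) + p < p ^ n := by
  obtain ⟨q, rfl⟩ : ∃ q, p = q + 1 := ⟨p - 1, by omega⟩
  obtain ⟨k, rfl⟩ : ∃ k, n = k + 1 := ⟨n - 1, by omega⟩
  have hq : 2 ≤ q := by omega
  have hk : 1 ≤ k := by omega
  have h2 : (q + 1) * (1 + k * q) ≤ (q + 1) * (q + 1) ^ k :=
    Nat.mul_le_mul_left _ (bern q k)
  have h3 : (q + 1) ^ (k + 1) = (q + 1) * (q + 1) ^ k := by ring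
  rw [h3]
  simp only [Nat.add_sub_cancel]
  nlinarith [h2, Nat.zero_le (k * q * q), Nat.zero_le (k * q)]

/-- stars and bars -/
lemma tuple_card (n s : ℕ) :
    Nat.card {m : Fin n → ℕ // ∑ i, m i = s} = (n + s - 1).choose s := by
  have e1 : {m : Fin n → ℕ // ∑ i, m i = s} ≃
      {f : Fin n →₀ ℕ // (f.sum fun _ k => k) = s} :=
    Equiv.subtypeEquiv Finsupp.equivFunOnFinite.symm (by
      intro m
      rw [Finsupp.sum_fintype]
      · simp
      · intro; rfl)
  have e2 : {f : Fin n →₀ ℕ // (f.sum fun _ k => k) = s} ≃ Sym (Fin n) s :=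
    Equiv.subtypeEquiv Multiset.toFinsupp.symm.toEquiv (by
      intro f
      simp only [AddEquiv.toEquiv_eq_coe, EquivLike.coe_coe, Multiset.toFinsupp_symm_apply,
        Finsupp.card_toMultiset]
      rfl)
  rw [Nat.card_congr (e1.trans e2), Nat.card_eq_fintype_card, Sym.card_sym_eq_choose]
  simp

lemma tuple_card' (j s : ℕ) :
    Nat.card {m : Fin (j + 1) → ℕ // ∑ i, m i = s} = (s + j).choose j := by
  rw [tuple_card]
  have h1 : j + 1 + s - 1 = s + j := by omega
  rw [h1]
  have h2 := Nat.choose_symm (by omega : j ≤ s + j)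
  have h3 : s + j - j = s := by omega
  rw [h3] at h2
  exact h2

/-- `dimCount p r k d` is the number of pairs `(m, ν)` with `m : Fin (r-1) → ℕ` and
`ν : ℕ` satisfying `1 ≤ ν ≤ p^k - 1` and `∑ i (2 m_i + 1) + 2 ν = d`; this is the
`𝔽_p`-dimension in degree `d` of `H_*^{r-1} ⊗ M_k`. -/
noncomputable def dimCount (p r k d : ℕ) : ℕ :=
  Nat.card {q : (Fin (r - 1) → ℕ) × ℕ //
    1 ≤ q.2 ∧ q.2 ≤ p ^ k - 1 ∧ (∑ i, (2 * q.1 i + 1)) + 2 * q.2 = d}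

/-- The counting argument of Section 6: for `p` an odd prime and `r ≥ 3`, in all
sufficiently large degrees `d ≡ r - 1 (mod 2)` one has
`(r-1) · dim (H_*^{r-1} ⊗ M_1)_d < dim (H_*^{r-1} ⊗ M_{r-1})_d`. -/
theorem dimCount_lt (p r : ℕ) (hp : p.Prime) (hodd : Odd p) (hr : 3 ≤ r) :
    ∃ D : ℕ, ∀ d : ℕ, D ≤ d → d ≡ r - 1 [MOD 2] →
      (r - 1) * dimCount p r 1 d < dimCount p r (r - 1) d := by
  obtain ⟨j, hj⟩ : ∃ j, r - 1 = j + 1 := ⟨r - 2, by omega⟩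
  set n := r - 1 with hn
  have hj1 : 1 ≤ j := by omega
  have hp3 : 3 ≤ p := by
    have h2 := hp.two_le
    rcases Nat.odd_iff.1 hodd with h
    omega
  have hn2 : 2 ≤ n := by omega
  set E := p ^ n + j with hE
  set a := n * (p - 1) with ha
  set T := p ^ n + a * (2 + E) ^ j + 1 with hT
  refine ⟨2 * T + n, fun d hd hmod => ?_⟩
  have hmod' : d % 2 = n % 2 := hmod
  set t := (d - n) / 2 with ht
  have hdt : d = 2 * t + n := by omega
  have hTt : T ≤ t := by omega
  have hpn : p ^ n ≤ T := by omega
  have hp1n : p ≤ p ^ n := Nat.le_self_pow (by omega) p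
  have hB1 : p - 1 ≤ t := by omega
  have hBn : p ^ n - 1 ≤ t := by omega
  -- uniform counting formula
  have hc : ∀ s : ℕ, Nat.card {m : Fin n → ℕ // ∑ i, m i = s} = (s + j).choose j := by
    rw [hj]
    exact fun s => tuple_card' j s
  -- upper bound for the degree-1 sum
  have hub : ∑ ν ∈ Finset.Icc 1 (p - 1),
      Nat.card {m : Fin n → ℕ // ∑ i, m i = t - ν} ≤ (p - 1) * (t - 1 + j).choose j := by
    calc ∑ ν ∈ Finset.Icc 1 (p - 1), Nat.card {m : Fin n → ℕ // ∑ i, m i = t - ν}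
        ≤ (Finset.Icc 1 (p - 1)).card * (t - 1 + j).choose j := by
          apply Finset.sum_le_card_nsmul
          intro x hx
          rw [Finset.mem_Icc] at hx
          rw [hc]
          exact Nat.choose_le_choose j (show t - x + j ≤ t - 1 + j by omega)
      _ = (p - 1) * (t - 1 + j).choose j := by
          rw [Nat.card_Icc]
          congr 1
  -- lower bound for the degree-(r-1) sum
  have hlb : (p ^ n - p) * (t - (p ^ n - 1) + j).choose j ≤
      ∑ ν ∈ Finset.Icc 1 (p ^ n - 1),
        Nat.card {m : Fin n → ℕ // ∑ i, m i = t - ν} := by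
    clear hub
    calc (p ^ n - p) * (t - (p ^ n - 1) + j).choose j
        = (Finset.Icc p (p ^ n - 1)).card * (t - (p ^ n - 1) + j).choose j := by
          rw [Nat.card_Icc]
          congr 1
          omega
      _ ≤ ∑ ν ∈ Finset.Icc p (p ^ n - 1),
          Nat.card {m : Fin n → ℕ // ∑ i, m i = t - ν} := by
          apply Finset.card_nsmul_le_sum
          intro x hx
          rw [Finset.mem_Icc] at hx
          rw [hc]
          refine Nat.choose_le_choose j ?_
          have h5 : t - (p ^ n - 1) ≤ t - x := Nat.sub_le_sub_left hx.2 t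
          omega
      _ ≤ ∑ ν ∈ Finset.Icc 1 (p ^ n - 1),
          Nat.card {m : Fin n → ℕ // ∑ i, m i = t - ν} := by
          apply Finset.sum_le_sum_of_subset
          exact Finset.Icc_subset_Icc (by omega) le_rfl
  -- the key middle inequality
  have hkey : a * (t - 1 + j).choose j < (p ^ n - p) * (t - (p ^ n - 1) + j).choose j := by
    clear hub hlb hc
    refine key_lemma j E (t - p ^ n + 2) a (p ^ n - p) (t - 1 + j) (t - (p ^ n - 1) + j) hj1
      ?_ ?_ ?_ ?_
    · have := hab_lemma p n hp3 hn2
      omega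
    · omega
    · omega
    · omega
  -- decompose the two dimCounts
  have hd1 : dimCount p r 1 d = ∑ ν ∈ Finset.Icc 1 (p - 1),
      Nat.card {m : Fin n → ℕ // ∑ i, m i = t - ν} := by
    rw [dimCount, hdt, pow_one]
    exact dim_decomp n (p - 1) t hB1
  have hd2 : dimCount p r n d = ∑ ν ∈ Finset.Icc 1 (p ^ n - 1),
      Nat.card {m : Fin n → ℕ // ∑ i, m i = t - ν} := by
    rw [dimCount, hdt]
    exact dim_decomp n (p ^ n - 1) t hBn
  rw [hd1, hd2]
  calc n * ∑ ν ∈ Finset.Icc 1 (p - 1), Nat.card {m : Fin n → ℕ // ∑ i, m i = t - ν}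
      ≤ n * ((p - 1) * (t - 1 + j).choose j) := Nat.mul_le_mul_left n hub
    _ = a * (t - 1 + j).choose j := by rw [ha]; ring
    _ < (p ^ n - p) * (t - (p ^ n - 1) + j).choose j := hkey
    _ ≤ ∑ ν ∈ Finset.Icc 1 (p ^ n - 1),
        Nat.card {m : Fin n → ℕ // ∑ i, m i = t - ν} := hlb
end
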